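/- Let A be a continuous inverse algebra and let p ∈ A be an idempotent. Then the corner algebra pAp with unit p, endowed with the subspace topology, is again a continuous inverse algebra: an element x ∈ pAp is invertible in pAp if and only if x + 1 − p is invertible in A; the set of elements of pAp invertible in pAp is open in pAp; and the inversion map on this set (sending x to its inverse relative to the unit p) is continuous. -/

import Mathlib

private lemma corner_absorb_left {A : Type*} [Ring A] {p x : A} (hp : p * p = p)
    (hx : p * x * p = x) : p * x = x := by
  conv_lhs => rw [← hx]
  rw [← mul_assoc, ← mul_assoc, hp, hx]

private lemma corner_absorb_right {A : Type*} [Ring A] {p x : A} (hp : p * p = p)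
    (hx : p * x * p = x) : x * p = x := by
  conv_lhs => rw [← hx]
  rw [mul_assoc, hp, hx]

private lemma corner_aux {A : Type*} [Ring A] {p x : A} (hp : p * p = p)
    (hx : p * x * p = x) (hU : IsUnit (x + 1 - p)) :
    p * (p * Ring.inverse (x + 1 - p) * p) * p = p * Ring.inverse (x + 1 - p) * p ∧
    x * (p * Ring.inverse (x + 1 - p) * p) = p ∧
    (p * Ring.inverse (x + 1 - p) * p) * x = p := by
  set u := x + 1 - p with hu
  set v := Ring.inverse u with hv
  have huv : u * v = 1 := Ring.mul_inverse_cancel _ hU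
  have hvu : v * u = 1 := Ring.inverse_mul_cancel _ hU
  have hpx : p * x = x := corner_absorb_left hp hx
  have hxp : x * p = x := corner_absorb_right hp hx
  have hpu : p * u = x := by
    rw [hu, mul_sub, mul_add, mul_one, hp, hpx]; abel
  have hup : u * p = x := by
    rw [hu, sub_mul, add_mul, one_mul, hp, hxp]; abel
  have hxv : x * v = p := by
    rw [← hpu, mul_assoc, huv, mul_one]
  have hvx : v * x = p := by
    rw [← hup, ← mul_assoc, hvu, one_mul]
  refine ⟨?_, ?_, ?_⟩
  · calc p * (p * v * p) * p = (p * p) * v * (p * p) := by noncomm_ring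
    _ = p * v * p := by rw [hp]
  · calc x * (p * v * p) = (x * p) * v * p := by noncomm_ring
    _ = x * v * p := by rw [hxp]
    _ = p * p := by rw [hxv]
    _ = p := hp
  · calc (p * v * p) * x = p * (v * (p * x)) := by noncomm_ring
    _ = p * (v * x) := by rw [hpx]
    _ = p * p := by rw [hvx]
    _ = p := hp

theorem stmt_3 (A : Type*) [Ring A] [Algebra ℂ A]
    [TopologicalSpace A] [IsTopologicalRing A] [T2Space A]
    [LocallyConvexSpace ℝ A] [ContinuousSMul ℂ A]
    (hopen : IsOpen {a : A | IsUnit a})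
    (hcont : ContinuousOn Ring.inverse {a : A | IsUnit a})
    (p : A) (hp : p * p = p) :
    (∀ x : A, p * x * p = x →
      ((∃ b : A, p * b * p = b ∧ x * b = p ∧ b * x = p) ↔ IsUnit (x + 1 - p))) ∧
    IsOpen {x : {y : A // p * y * p = y} |
      ∃ b : A, p * b * p = b ∧ (x : A) * b = p ∧ b * (x : A) = p} ∧
    ∃ ι : A → A,
      ContinuousOn ι
        {x : A | p * x * p = x ∧ ∃ b : A, p * b * p = b ∧ x * b = p ∧ b * x = p} ∧
      ∀ x : A, p * x * p = x → (∃ b : A, p * b * p = b ∧ x * b = p ∧ b * x = p) →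
        p * ι x * p = ι x ∧ x * ι x = p ∧ ι x * x = p := by
  have key : ∀ x : A, p * x * p = x →
      ((∃ b : A, p * b * p = b ∧ x * b = p ∧ b * x = p) ↔ IsUnit (x + 1 - p)) := by
    intro x hx
    constructor
    · rintro ⟨b, hb, hxb, hbx⟩
      have hxp : x * p = x := corner_absorb_right hp hx
      have hpx : p * x = x := corner_absorb_left hp hx
      have hbp : b * p = b := corner_absorb_right hp hb
      have hpb : p * b = b := corner_absorb_left hp hb
      refine ⟨⟨x + 1 - p, b + 1 - p, ?_, ?_⟩, rfl⟩
      · calc (x + 1 - p) * (b + 1 - p)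
            = x * b + (x - x * p) + ((b - p * b) + (1 - p - p + p * p)) := by noncomm_ring
        _ = 1 := by rw [hxb, hxp, hpb, hp]; abel
      · calc (b + 1 - p) * (x + 1 - p)
            = b * x + (b - b * p) + ((x - p * x) + (1 - p - p + p * p)) := by noncomm_ring
        _ = 1 := by rw [hbx, hbp, hpx, hp]; abel
    · intro hU
      obtain ⟨h1, h2, h3⟩ := corner_aux hp hx hU
      exact ⟨p * Ring.inverse (x + 1 - p) * p, h1, h2, h3⟩
  refine ⟨key, ?_, ?_⟩
  · have hcontmap : Continuous fun x : {y : A // p * y * p = y} => (x : A) + 1 - p :=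
      (continuous_subtype_val.add continuous_const).sub continuous_const
    have hset : {x : {y : A // p * y * p = y} |
        ∃ b : A, p * b * p = b ∧ (x : A) * b = p ∧ b * (x : A) = p}
        = (fun x : {y : A // p * y * p = y} => (x : A) + 1 - p) ⁻¹' {a : A | IsUnit a} := by
      ext x
      exact key x x.2
    rw [hset]
    exact hopen.preimage hcontmap
  · refine ⟨fun a => p * Ring.inverse (a + 1 - p) * p, ?_, ?_⟩
    · have hmap : Continuous fun a : A => a + 1 - p :=
        (continuous_id.add continuous_const).sub continuous_const
      have hmapsTo : Set.MapsTo (fun a : A => a + 1 - p)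
          {x : A | p * x * p = x ∧ ∃ b : A, p * b * p = b ∧ x * b = p ∧ b * x = p}
          {a : A | IsUnit a} := by
        rintro x ⟨hx, hb⟩
        exact (key x hx).mp hb
      have h1 : ContinuousOn (fun a : A => Ring.inverse (a + 1 - p))
          {x : A | p * x * p = x ∧ ∃ b : A, p * b * p = b ∧ x * b = p ∧ b * x = p} :=
        hcont.comp hmap.continuousOn hmapsTo
      exact (continuousOn_const.mul h1).mul continuousOn_const
    · intro x hx hb
      exact corner_aux hp hx ((key x hx).mp hb)
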